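/- Fix α ∈ (−1,1), a real γ ≥ 1, an integer p ≥ 1, and a constant K > 0. Then there exists a constant C > 0 such that for every integer m ≥ 2 the following holds: with mesh points x_j = (j/m)^γ (j = 0, …, m) and widths h_j = x_j − x_{j−1}, for any nonnegative reals e_1, …, e_m satisfying e_1 ≤ K·h_1^{α+1} and e_j ≤ K·h_j^{p+2}·x_{j−1}^{α−p−1} for all 2 ≤ j ≤ m, one has Σ_{j=1}^m e_j ≤ C · m^{−γ(α+1)} · Σ_{j=1}^m j^{γ(α+1)−(p+2)}. All real powers are Real.rpow. -/

import Mathlib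

set_option maxHeartbeats 800000


open scoped BigOperators

/-- Error-sum bound for the `h` method on an algebraically graded mesh: the total error
is bounded by `C · m^{-γ(α+1)} · Σ_{j=1}^m j^{γ(α+1)-(p+2)}`. -/
theorem h_method_error_sum_bound (α γ : ℝ) (p : ℤ) (K : ℝ)
    (hα₁ : -1 < α) (hα₂ : α < 1) (hγ : 1 ≤ γ) (hp : 1 ≤ p) (hK : 0 < K) :
    ∃ C > 0, ∀ m : ℕ, 2 ≤ m →
      ∀ x h e : ℕ → ℝ,
        (∀ j, j ≤ m → x j = ((j : ℝ) / m) ^ γ) →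
        (∀ j, 1 ≤ j → j ≤ m → h j = x j - x (j - 1)) →
        (∀ j, 1 ≤ j → j ≤ m → 0 ≤ e j) →
        e 1 ≤ K * h 1 ^ (α + 1) →
        (∀ j, 2 ≤ j → j ≤ m →
          e j ≤ K * h j ^ ((p : ℝ) + 2) * x (j - 1) ^ (α - p - 1)) →
        ∑ j ∈ Finset.Icc 1 m, e j ≤
          C * (m : ℝ) ^ (-(γ * (α + 1))) *
            ∑ j ∈ Finset.Icc 1 m, (j : ℝ) ^ (γ * (α + 1) - ((p : ℝ) + 2)) := by
  have hγ0 : (0:ℝ) < γ := lt_of_lt_of_le one_pos hγ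
  set q : ℝ := (p : ℝ) + 2 with hq_def
  have hp1 : (1:ℝ) ≤ (p:ℝ) := by exact_mod_cast hp
  have hq3 : (3:ℝ) ≤ q := by rw [hq_def]; linarith
  have hq0 : (0:ℝ) < q := by linarith
  set s : ℝ := α - (p:ℝ) - 1 with hs_def
  have hs0 : s < 0 := by rw [hs_def]; linarith
  set β : ℝ := γ * (α + 1) with hβ_def
  set C : ℝ := K * γ ^ q * 2 ^ (γ * q) with hC_def
  have hγq1 : (1:ℝ) ≤ γ ^ q := Real.one_le_rpow hγ hq0.le
  have h2q1 : (1:ℝ) ≤ (2:ℝ) ^ (γ * q) := Real.one_le_rpow one_le_two (by positivity)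
  have hKC : K ≤ C := by
    calc K = K * 1 * 1 := by ring
      _ ≤ K * γ ^ q * 2 ^ (γ * q) := by
          apply mul_le_mul (by nlinarith) h2q1 zero_le_one; nlinarith
  have hC0 : 0 < C := lt_of_lt_of_le hK hKC
  refine ⟨C, hC0, ?_⟩
  intro m hm x h e hx hh he he1 hej
  have hm0 : (0:ℝ) < m := by positivity
  have key : ∀ j ∈ Finset.Icc 1 m, e j ≤ C * (m:ℝ) ^ (-β) * (j:ℝ) ^ (β - q) := by
    intro j hj
    obtain ⟨hj1, hjm⟩ := Finset.mem_Icc.mp hj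
    rcases eq_or_lt_of_le hj1 with h1 | h2
    · -- j = 1
      subst h1
      have hx1 : x 1 = ((1:ℝ) / m) ^ γ := by simpa using hx 1 (by omega)
      have hx0 : x 0 = 0 := by
        have := hx 0 (by omega)
        simpa [Real.zero_rpow (ne_of_gt hγ0)] using this
      have hh1 : h 1 = ((1:ℝ) / m) ^ γ := by
        rw [hh 1 le_rfl (by omega), hx1, hx0]; ring
      have hpow : h 1 ^ (α + 1) = (m:ℝ) ^ (-β) := by
        rw [hh1, ← Real.rpow_mul (by positivity), ← hβ_def, one_div,
          Real.inv_rpow hm0.le, ← Real.rpow_neg hm0.le]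
      calc e 1 ≤ K * h 1 ^ (α + 1) := he1
        _ = K * (m:ℝ) ^ (-β) := by rw [hpow]
        _ ≤ C * (m:ℝ) ^ (-β) * (1:ℝ) ^ (β - q) := by
            rw [Real.one_rpow, mul_one]
            exact mul_le_mul_of_nonneg_right hKC (Real.rpow_pos_of_pos hm0 _).le
        _ = C * (m:ℝ) ^ (-β) * ((1:ℕ):ℝ) ^ (β - q) := by norm_num
    · -- 2 ≤ j
      have hj2 : 2 ≤ j := h2
      set a : ℝ := (j:ℝ) / m with ha_def
      set b : ℝ := ((j:ℝ) - 1) / m with hb_def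
      have hja : (2:ℝ) ≤ (j:ℝ) := by exact_mod_cast hj2
      have hj0 : (0:ℝ) < (j:ℝ) := by linarith
      have ha0 : 0 < a := by positivity
      have hb0 : 0 < b := by apply div_pos _ hm0; linarith
      have hba : b ≤ a := by rw [ha_def, hb_def]; gcongr; linarith
      have hcast : ((j - 1 : ℕ) : ℝ) = (j:ℝ) - 1 := by
        have : (1:ℕ) ≤ j := hj1
        push_cast [this]; ring
      have hxj : x j = a ^ γ := hx j hjm
      have hxj1 : x (j - 1) = b ^ γ := by rw [hx (j-1) (by omega), hcast]
      -- bound on h j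
      have hhj : h j ≤ γ * a ^ γ * (j:ℝ)⁻¹ := by
        have hber : 1 + γ * (b / a - 1) ≤ (1 + (b / a - 1)) ^ γ :=
          one_add_mul_self_le_rpow_one_add (by
            have : 0 < b / a := div_pos hb0 ha0
            linarith) hγ
        have hba' : (1 + (b / a - 1)) = b / a := by ring
        rw [hba'] at hber
        have hdiv : (b / a) ^ γ = b ^ γ / a ^ γ := Real.div_rpow hb0.le ha0.le γ
        have haγ : 0 < a ^ γ := Real.rpow_pos_of_pos ha0 _
        have h1 : a ^ γ - b ^ γ ≤ γ * a ^ γ * (1 - b / a) := by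
          rw [hdiv] at hber
          have := mul_le_mul_of_nonneg_left hber haγ.le
          rw [mul_div_cancel₀ _ (ne_of_gt haγ)] at this
          nlinarith
        have h2' : 1 - b / a = (j:ℝ)⁻¹ := by
          rw [ha_def, hb_def]
          field_simp
          ring
        rw [hh j (by omega) hjm, hxj, hxj1, ← h2']
        exact h1
      have hhj0 : 0 ≤ h j := by
        rw [hh j (by omega) hjm, hxj, hxj1]
        exact sub_nonneg.mpr (Real.rpow_le_rpow hb0.le hba hγ0.le)
      -- bound on h j ^ q
      have hhq : h j ^ q ≤ γ ^ q * a ^ (γ * q) * (j:ℝ) ^ (-q) := by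
        calc h j ^ q ≤ (γ * a ^ γ * (j:ℝ)⁻¹) ^ q := Real.rpow_le_rpow hhj0 hhj hq0.le
          _ = γ ^ q * (a ^ γ) ^ q * ((j:ℝ)⁻¹) ^ q := by
              rw [Real.mul_rpow (by positivity) (by positivity),
                Real.mul_rpow hγ0.le (by positivity)]
          _ = γ ^ q * a ^ (γ * q) * (j:ℝ) ^ (-q) := by
              rw [← Real.rpow_mul ha0.le, Real.inv_rpow hj0.le, ← Real.rpow_neg hj0.le]
      -- bound on x (j-1) ^ s
      have hab2 : a / 2 ≤ b := by
        have h0 : (0:ℝ) ≤ (m:ℝ) * ((j:ℝ) - 2) := mul_nonneg hm0.le (by linarith)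
        rw [ha_def, hb_def, div_div, div_le_div_iff₀ (by positivity) hm0]
        calc (j:ℝ) * m = ((j:ℝ) - 1) * (m * 2) - m * ((j:ℝ) - 2) := by ring
          _ ≤ ((j:ℝ) - 1) * (m * 2) := by linarith
      have hxs : x (j - 1) ^ s ≤ a ^ (γ * s) * 2 ^ (γ * q) := by
        have hbs : (b ^ γ) ^ s = b ^ (γ * s) := (Real.rpow_mul hb0.le _ _).symm
        have hγs : γ * s ≤ 0 := by nlinarith
        have h1 : b ^ (γ * s) ≤ (a / 2) ^ (γ * s) :=
          Real.rpow_le_rpow_of_nonpos (by positivity) hab2 hγs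
        have h2' : (a / 2) ^ (γ * s) = a ^ (γ * s) * ((2:ℝ) ^ (γ * s))⁻¹ := by
          rw [Real.div_rpow ha0.le (by norm_num), div_eq_mul_inv]
        have h3 : ((2:ℝ) ^ (γ * s))⁻¹ = (2:ℝ) ^ (-(γ * s)) := by
          rw [Real.rpow_neg (by norm_num)]
        have h4 : (2:ℝ) ^ (-(γ * s)) ≤ (2:ℝ) ^ (γ * q) :=
          Real.rpow_le_rpow_of_exponent_le one_le_two (by rw [hq_def, hs_def]; nlinarith)
        calc x (j - 1) ^ s = b ^ (γ * s) := by rw [hxj1, hbs]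
          _ ≤ (a / 2) ^ (γ * s) := h1
          _ = a ^ (γ * s) * (2:ℝ) ^ (-(γ * s)) := by rw [h2', h3]
          _ ≤ a ^ (γ * s) * (2:ℝ) ^ (γ * q) :=
              mul_le_mul_of_nonneg_left h4 (Real.rpow_nonneg ha0.le _)
      -- combine
      have hxs0 : 0 ≤ x (j - 1) ^ s := by
        rw [hxj1]; exact Real.rpow_nonneg (Real.rpow_nonneg hb0.le _) _
      have hcomb : e j ≤ K * (γ ^ q * a ^ (γ * q) * (j:ℝ) ^ (-q)) *
          (a ^ (γ * s) * 2 ^ (γ * q)) := by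
        calc e j ≤ K * h j ^ q * x (j - 1) ^ s := hej j hj2 hjm
          _ ≤ K * (γ ^ q * a ^ (γ * q) * (j:ℝ) ^ (-q)) * (a ^ (γ * s) * 2 ^ (γ * q)) := by
              apply mul_le_mul _ hxs _ (by positivity)
              · exact mul_le_mul_of_nonneg_left hhq hK.le
              · exact hxs0
      refine hcomb.trans (le_of_eq ?_)
      have e1 : a ^ (γ * q) * a ^ (γ * s) = a ^ β := by
        rw [← Real.rpow_add ha0, hβ_def, hq_def, hs_def]; ring_nf
      have e2 : a ^ β = (j:ℝ) ^ β * (m:ℝ) ^ (-β) := by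
        rw [ha_def, Real.div_rpow hj0.le hm0.le, Real.rpow_neg hm0.le, div_eq_mul_inv]
      have e3 : (j:ℝ) ^ β * (j:ℝ) ^ (-q) = (j:ℝ) ^ (β - q) := by
        rw [← Real.rpow_add hj0]; ring_nf
      calc K * (γ ^ q * a ^ (γ * q) * (j:ℝ) ^ (-q)) * (a ^ (γ * s) * 2 ^ (γ * q))
          = C * (a ^ (γ * q) * a ^ (γ * s)) * (j:ℝ) ^ (-q) := by rw [hC_def]; ring
        _ = C * ((j:ℝ) ^ β * (m:ℝ) ^ (-β)) * (j:ℝ) ^ (-q) := by rw [e1, e2]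
        _ = C * (m:ℝ) ^ (-β) * ((j:ℝ) ^ β * (j:ℝ) ^ (-q)) := by ring
        _ = C * (m:ℝ) ^ (-β) * (j:ℝ) ^ (β - q) := by rw [e3]
  calc ∑ j ∈ Finset.Icc 1 m, e j ≤ ∑ j ∈ Finset.Icc 1 m, C * (m:ℝ) ^ (-β) * (j:ℝ) ^ (β - q) :=
        Finset.sum_le_sum key
    _ = C * (m:ℝ) ^ (-β) * ∑ j ∈ Finset.Icc 1 m, (j:ℝ) ^ (β - q) := by
        rw [Finset.mul_sum]
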